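/- Let A be the constant 3×3 matrix A = ![![0, k_g, -ε k_n], ![k_g, 0, ε τ_g], ![k_n, τ_g, 0]] with real constants k_g, k_n, τ_g and ε = ±1 (the Darboux frame matrix of a curve with constant geodesic curvature, normal curvature and geodesic torsion on a timelike surface in Minkowski 3-space). Set μ = k_g² − ε k_n² + ε τ_g². Then the (1,1) entry of exp(sA) − I is (k_g² − ε k_n²)·(cosh(√μ · s) − 1)/μ when μ > 0. -/

import Mathlib

open Matrix

/-- For the constant Darboux matrix `A` with `μ = k_g² − ε k_n² + ε τ_g² > 0`, the (1,1) entry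
of `exp(sA) − I` equals `(k_g² − ε k_n²)(cosh(√μ s) − 1)/μ`. -/
theorem stmt_6 (kg kn τg ε : ℝ) (hε : ε = 1 ∨ ε = -1)
    (μ : ℝ) (hμdef : μ = kg ^ 2 - ε * kn ^ 2 + ε * τg ^ 2) (hμ : 0 < μ)
    (A : Matrix (Fin 3) (Fin 3) ℝ)
    (hA : A = !![0, kg, -ε * kn; kg, 0, ε * τg; kn, τg, 0]) (s : ℝ) :
    (NormedSpace.exp (s • A) - 1) 0 0 =
      (kg ^ 2 - ε * kn ^ 2) * (Real.cosh (Real.sqrt μ * s) - 1) / μ := by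
  have hA3 : A ^ 3 = μ • A := by
    subst hA hμdef
    rcases hε with rfl | rfl <;>
    · ext i j
      fin_cases i <;> fin_cases j <;>
        simp [pow_succ, Matrix.mul_apply, Fin.sum_univ_succ, Matrix.smul_apply] <;> ring
  have hA00 : A 0 0 = 0 := by rw [hA]; rfl
  have hA200 : (A ^ 2) 0 0 = kg ^ 2 - ε * kn ^ 2 := by
    subst hA
    simp [pow_succ, Matrix.mul_apply, Fin.sum_univ_succ]
    ring
  have hAA2 : A * A ^ 2 = μ • A := by
    have h := pow_succ' A 2
    norm_num at h
    rw [← h, hA3]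
  have hpow : ∀ k : ℕ, A ^ (2 * k + 1) = μ ^ k • A ∧ A ^ (2 * k + 2) = μ ^ k • A ^ 2 := by
    intro k
    induction k with
    | zero => simp
    | succ n ih =>
      have h1 : A ^ (2 * (n + 1) + 1) = μ ^ (n + 1) • A := by
        rw [show 2 * (n + 1) + 1 = (2 * n + 1) + 2 from by ring, pow_add, ih.1,
          smul_mul_assoc, hAA2, smul_smul, ← pow_succ]
      refine ⟨h1, ?_⟩
      rw [show 2 * (n + 1) + 2 = (2 * (n + 1) + 1) + 1 from rfl, pow_succ, h1,
        smul_mul_assoc, ← sq]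
  set c : ℝ := kg ^ 2 - ε * kn ^ 2 with hc
  have hent : ∀ n : ℕ, ((s • A) ^ n) 0 0 =
      if n = 0 then 1 else if Even n then
        s ^ n * μ ^ (n / 2 - 1) * c else 0 := by
    intro n
    rw [smul_pow]
    match n with
    | 0 => simp
    | (n + 1) =>
      rcases Nat.even_or_odd (n + 1) with he | ho
      · obtain ⟨k, hk⟩ := he
        have hk' : n + 1 = 2 * (k - 1) + 2 := by omega
        rw [hk', (hpow (k - 1)).2]
        simp only [Matrix.smul_apply, smul_eq_mul, hA200]
        rw [if_neg (by omega), if_pos (by rw [Nat.even_iff]; omega),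
          show (2 * (k - 1) + 2) / 2 - 1 = k - 1 from by omega]
        ring
      · obtain ⟨k, hk⟩ := ho
        rw [hk, (hpow k).1]
        simp only [Matrix.smul_apply, smul_eq_mul, hA00]
        rw [if_neg (by omega), if_neg (by rw [Nat.even_iff]; omega)]
        ring
  -- the scalar series for the (0,0) entry of the exponential
  set f : ℕ → ℝ := fun n => (Nat.factorial n : ℝ)⁻¹ * (((s • A) ^ n) 0 0) with hf
  have hexp : HasSum f ((NormedSpace.exp (s • A)) 0 0) := by
    letI : NormedRing (Matrix (Fin 3) (Fin 3) ℝ) := Matrix.linftyOpNormedRing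
    letI : NormedAlgebra ℝ (Matrix (Fin 3) (Fin 3) ℝ) := Matrix.linftyOpNormedAlgebra
    have h := NormedSpace.exp_series_hasSum_exp' (𝕂 := ℝ) (s • A)
    have hcont : Continuous (fun M : Matrix (Fin 3) (Fin 3) ℝ => M 0 0) :=
      (continuous_apply (0 : Fin 3)).comp (continuous_apply (0 : Fin 3))
    have := h.map (AddMonoidHom.mk' (fun M : Matrix (Fin 3) (Fin 3) ℝ => M 0 0)
      (fun _ _ => rfl)) hcont
    exact this
  set x : ℝ := Real.sqrt μ * s with hx
  have hμ0 : μ ≠ 0 := ne_of_gt hμ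
  have hx2 : ∀ k : ℕ, x ^ (2 * k) = μ ^ k * s ^ (2 * k) := by
    intro k
    rw [hx, mul_pow, pow_mul (Real.sqrt μ), Real.sq_sqrt hμ.le]
  have hcosh := Real.hasSum_cosh x
  have h2 : HasSum (fun k : ℕ => c / μ * (x ^ (2 * k) / (Nat.factorial (2 * k) : ℝ)))
      (c / μ * Real.cosh x) := hcosh.mul_left _
  have h3 : HasSum (fun k : ℕ => if k = 0 then 1 - c / μ else 0) (1 - c / μ) :=
    hasSum_ite_eq 0 _
  have h4 := h2.add h3
  have heq : (fun k : ℕ => c / μ * (x ^ (2 * k) / (Nat.factorial (2 * k) : ℝ)) +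
      (if k = 0 then 1 - c / μ else 0)) = fun k : ℕ => f (2 * k) := by
    funext k
    match k with
    | 0 =>
      simp only [hf, hent 0, if_pos rfl]
      norm_num
    | (k + 1) =>
      rw [hf]
      simp only [hent (2 * (k + 1))]
      rw [if_neg (by omega), if_pos (show Even (2 * (k + 1)) from ⟨k + 1, by ring⟩),
        if_neg (by omega), hx2 (k + 1), show 2 * (k + 1) / 2 - 1 = k from by omega]
      field_simp
      ring
  rw [heq] at h4
  have hodd : ∀ n : ℕ, n ∉ Set.range (fun k : ℕ => 2 * k) → f n = 0 := by
    intro n hn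
    have hno : ¬ Even n := by
      intro ⟨k, hk⟩
      exact hn ⟨k, by show 2 * k = n; omega⟩
    have hn0 : n ≠ 0 := by rintro rfl; exact hno Even.zero
    rw [hf]
    simp only [hent n, if_neg hn0, if_neg hno, mul_zero]
  have h5 : HasSum f (c / μ * Real.cosh x + (1 - c / μ)) :=
    (Function.Injective.hasSum_iff (fun a b h => by omega) hodd).mp h4
  have hval : (NormedSpace.exp (s • A)) 0 0 = c / μ * Real.cosh x + (1 - c / μ) :=
    hexp.unique h5
  rw [Matrix.sub_apply, Matrix.one_apply_eq, hval]
  field_simp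
  ring
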